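/- Let β₁, β₂ ∈ ℝ and p, q ∈ ℤ with E'(β₁,β₂) = (1/5)(p+αq)²E(β₁,β₂) ≠ 0. Then there exists a natural number n₀ such that for all n ≥ n₀, the generalized Fibonacci quaternion H_n^{p,q} is invertible in ℍ(β₁,β₂). -/

import Mathlib

open Quaternion

noncomputable def goldenα : ℝ := (1 + Real.sqrt 5) / 2

noncomputable def Efun (β₁ β₂ : ℝ) : ℝ :=
  (1 / 5) * (1 + β₁ + 2 * β₂ + 5 * β₁ * β₂ + goldenα * (β₁ + 3 * β₂ + 8 * β₁ * β₂))

/-- Generalized Fibonacci numbers: `h 0 = p`, `h 1 = q`, `h (n+2) = h (n+1) + h n`. -/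
def gfib (p q : ℤ) : ℕ → ℤ
  | 0 => p
  | 1 => q
  | (n + 2) => gfib p q (n + 1) + gfib p q n

/-- The `n`-th generalized Fibonacci quaternion `H_n^{p,q}` in `ℍ(β₁,β₂)`,
realized as the quaternion algebra `ℍ[ℝ, -β₁, -β₂]`. -/
def GFibQuat (p q : ℤ) (β₁ β₂ : ℝ) (n : ℕ) : ℍ[ℝ, -β₁, -β₂] :=
  ⟨(gfib p q n : ℝ), (gfib p q (n + 1) : ℝ), (gfib p q (n + 2) : ℝ), (gfib p q (n + 3) : ℝ)⟩

lemma isUnit_of_nrm_ne_zero {c₁ c₂ : ℝ} (a : ℍ[ℝ, c₁, c₂])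
    (h : a.re ^ 2 - c₁ * a.imI ^ 2 - c₂ * a.imJ ^ 2 + c₁ * c₂ * a.imK ^ 2 ≠ 0) :
    IsUnit a := by
  refine ⟨⟨a, (a.re ^ 2 - c₁ * a.imI ^ 2 - c₂ * a.imJ ^ 2 + c₁ * c₂ * a.imK ^ 2)⁻¹ • star a,
    ?_, ?_⟩, rfl⟩ <;>
  · apply QuaternionAlgebra.ext <;>
      simp only [QuaternionAlgebra.re_mul, QuaternionAlgebra.imI_mul,
        QuaternionAlgebra.imJ_mul, QuaternionAlgebra.imK_mul,
        QuaternionAlgebra.re_smul, QuaternionAlgebra.imI_smul,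
        QuaternionAlgebra.imJ_smul, QuaternionAlgebra.imK_smul,
        QuaternionAlgebra.re_star, QuaternionAlgebra.imI_star,
        QuaternionAlgebra.imJ_star, QuaternionAlgebra.imK_star,
        QuaternionAlgebra.re_one, QuaternionAlgebra.imI_one,
        QuaternionAlgebra.imJ_one, QuaternionAlgebra.imK_one, smul_eq_mul] <;>
      field_simp <;> ring

theorem gfib_quaternion_eventually_isUnit (p q : ℤ) (β₁ β₂ : ℝ)
    (hE' : (1 / 5) * ((p : ℝ) + goldenα * q) ^ 2 * Efun β₁ β₂ ≠ 0) :
    ∃ n₀ : ℕ, ∀ n ≥ n₀, IsUnit (GFibQuat p q β₁ β₂ n) := by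
  obtain ⟨s, hsdef⟩ : ∃ s : ℝ, s = Real.sqrt 5 := ⟨_, rfl⟩
  have hs5 : s ^ 2 = 5 := by rw [hsdef]; exact Real.sq_sqrt (by norm_num)
  have hs5pos : (0:ℝ) < s := by rw [hsdef]; exact Real.sqrt_pos.2 (by norm_num)
  have hs2 : (2:ℝ) < s := by nlinarith
  obtain ⟨φ, hφ⟩ : ∃ φ : ℝ, φ = (1 + s) / 2 := ⟨_, rfl⟩
  have hgold : goldenα = φ := by rw [hφ, hsdef]; rfl
  obtain ⟨ψ, hψ⟩ : ∃ ψ : ℝ, ψ = (1 - s) / 2 := ⟨_, rfl⟩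
  have hφ2 : φ ^ 2 = φ + 1 := by rw [hφ]; field_simp; linear_combination hs5
  have hψ2 : ψ ^ 2 = ψ + 1 := by rw [hψ]; field_simp; linear_combination hs5
  have hφpos : (0:ℝ) < φ := by rw [hφ]; nlinarith
  have hφne : φ ≠ 0 := ne_of_gt hφpos
  have hsne : s ≠ 0 := ne_of_gt hs5pos
  obtain ⟨A, hA⟩ : ∃ A : ℝ, A = ((q:ℝ) - p * ψ) / s := ⟨_, rfl⟩
  obtain ⟨B, hB⟩ : ∃ B : ℝ, B = ((p:ℝ) * φ - q) / s := ⟨_, rfl⟩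
  -- closed form
  have hclosed : ∀ n : ℕ, (gfib p q n : ℝ) = A * φ ^ n + B * ψ ^ n := by
    have key : ∀ n : ℕ, ((gfib p q n : ℝ) = A * φ ^ n + B * ψ ^ n) ∧
        ((gfib p q (n+1) : ℝ) = A * φ ^ (n+1) + B * ψ ^ (n+1)) := by
      intro n
      induction n with
      | zero =>
        constructor
        · show ((p:ℤ) : ℝ) = _
          rw [hA, hB, hφ, hψ]; field_simp; ring
        · show ((q:ℤ) : ℝ) = _
          rw [hA, hB, hφ, hψ]; field_simp; ring
      | succ n ih =>
        refine ⟨ih.2, ?_⟩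
        have hrec : gfib p q (n + 2) = gfib p q (n + 1) + gfib p q n := rfl
        rw [hrec]
        push_cast
        rw [ih.1, ih.2]
        linear_combination (-A * φ ^ n) * hφ2 + (-B * ψ ^ n) * hψ2
    exact fun n => (key n).1
  -- the norm sequence
  obtain ⟨N, hNdef⟩ : ∃ N : ℕ → ℝ, ∀ n, N n = (gfib p q n : ℝ) ^ 2
      + β₁ * (gfib p q (n+1) : ℝ) ^ 2 + β₂ * (gfib p q (n+2) : ℝ) ^ 2
      + β₁ * β₂ * (gfib p q (n+3) : ℝ) ^ 2 := ⟨_, fun _ => rfl⟩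
  obtain ⟨g, hg⟩ : ∃ g : ℝ → ℝ, g = fun x => (A + B * x) ^ 2 + β₁ * (A * φ + B * ψ * x) ^ 2
      + β₂ * (A * φ ^ 2 + B * ψ ^ 2 * x) ^ 2 + β₁ * β₂ * (A * φ ^ 3 + B * ψ ^ 3 * x) ^ 2 :=
    ⟨_, rfl⟩
  have hrabs : |ψ / φ| < 1 := by
    rw [abs_div, abs_of_pos hφpos, div_lt_one hφpos, abs_lt]
    constructor <;> rw [hψ, hφ] <;> nlinarith
  have hrt : Filter.Tendsto (fun n : ℕ => (ψ / φ) ^ n) Filter.atTop (nhds 0) :=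
    tendsto_pow_atTop_nhds_zero_of_abs_lt_one hrabs
  have hgc : Continuous g := by rw [hg]; fun_prop
  have hgt : Filter.Tendsto (fun n : ℕ => g ((ψ / φ) ^ n)) Filter.atTop (nhds (g 0)) :=
    (hgc.tendsto 0).comp hrt
  have heq : ∀ n : ℕ, g ((ψ / φ) ^ n) = N n / φ ^ (2 * n) := by
    intro n
    have hpn : φ ^ n ≠ 0 := pow_ne_zero _ hφne
    rw [eq_div_iff (pow_ne_zero _ hφne), hg, hNdef n]
    rw [hclosed n, hclosed (n+1), hclosed (n+2), hclosed (n+3), div_pow]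
    field_simp
    ring
  have hNt : Filter.Tendsto (fun n : ℕ => N n / φ ^ (2 * n)) Filter.atTop (nhds (g 0)) :=
    hgt.congr heq
  -- g 0 ≠ 0
  have h1 : ((p:ℝ) + φ * q) ^ 2 * Efun β₁ β₂ ≠ 0 := by
    rw [← hgold]
    intro h; apply hE'; rw [mul_assoc, h, mul_zero]
  have hψφ : ψ = 1 - φ := by rw [hψ, hφ]; ring
  have hA2' : A ^ 2 = ((q:ℝ) - p * (1 - φ)) ^ 2 / 5 := by
    rw [hA, hψφ, div_pow, hs5]
  have hC : 1 + β₁ * φ ^ 2 + β₂ * φ ^ 4 + β₁ * β₂ * φ ^ 6 = 5 * Efun β₁ β₂ := by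
    simp only [Efun, hgold]
    linear_combination (β₁ + β₂ * (φ ^ 2 + φ + 2)
      + β₁ * β₂ * (φ ^ 4 + φ ^ 3 + 2 * φ ^ 2 + 3 * φ + 5)) * hφ2
  have e2' : ((q:ℝ) - p * (1 - φ)) * φ = (p:ℝ) + φ * q := by
    linear_combination (p:ℝ) * hφ2
  have hg0 : g 0 = ((p:ℝ) + φ * q) ^ 2 * Efun β₁ β₂ / φ ^ 2 := by
    rw [eq_div_iff (pow_ne_zero _ hφne)]
    have e3 : g 0 * φ ^ 2 = (((q:ℝ) - p * (1 - φ)) * φ) ^ 2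
        * ((1 + β₁ * φ ^ 2 + β₂ * φ ^ 4 + β₁ * β₂ * φ ^ 6) / 5) := by
      have hg0' : g 0 = A ^ 2 + β₁ * (A * φ) ^ 2 + β₂ * (A * φ ^ 2) ^ 2
          + β₁ * β₂ * (A * φ ^ 3) ^ 2 := by
        rw [hg]; norm_num
      rw [hg0', show A ^ 2 + β₁ * (A * φ) ^ 2 + β₂ * (A * φ ^ 2) ^ 2 + β₁ * β₂ * (A * φ ^ 3) ^ 2
        = A ^ 2 * (1 + β₁ * φ ^ 2 + β₂ * φ ^ 4 + β₁ * β₂ * φ ^ 6) from by ring, hA2']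
      ring
    rw [e3, e2', hC]
    ring
  have hL : g 0 ≠ 0 := by
    rw [hg0]; exact div_ne_zero h1 (pow_ne_zero _ hφne)
  have hev : ∀ᶠ n in Filter.atTop, N n / φ ^ (2 * n) ≠ 0 := hNt.eventually_ne hL
  rw [Filter.eventually_atTop] at hev
  obtain ⟨n₀, hn₀⟩ := hev
  refine ⟨n₀, fun n hn => ?_⟩
  have hNn : N n ≠ 0 := fun h => hn₀ n hn (by rw [h, zero_div])
  apply isUnit_of_nrm_ne_zero
  intro hc
  apply hNn
  rw [hNdef n]
  have h1 : (GFibQuat p q β₁ β₂ n).re = (gfib p q n : ℝ) := rfl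
  have h2 : (GFibQuat p q β₁ β₂ n).imI = (gfib p q (n+1) : ℝ) := rfl
  have h3 : (GFibQuat p q β₁ β₂ n).imJ = (gfib p q (n+2) : ℝ) := rfl
  have h4 : (GFibQuat p q β₁ β₂ n).imK = (gfib p q (n+3) : ℝ) := rfl
  rw [← h1, ← h2, ← h3, ← h4]
  linear_combination hc
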